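/- Let λ(s) be a C¹ solution on [s₀, ∞) of |λ' + λ²| ≤ h(s) with ∫ s·h(s)ds < ∞ and s·λ(s) → 0 as s → ∞. Then ∫_{s₀}^∞ |λ(s)| ds < ∞, and consequently any solution of (log J)' = λ satisfies C^{−1} ≤ J(s) ≤ C for a constant C independent of s. -/

import Mathlib

open MeasureTheory Set Filter

lemma my_integrableOn_Ici_of_bound (a C : ℝ) (f : ℝ → ℝ)
    (hloc : ∀ T, a ≤ T → IntegrableOn f (Icc a T))
    (hnn : ∀ s, a ≤ s → 0 ≤ f s)
    (hC : ∀ T, a ≤ T → (∫ x in a..T, f x) ≤ C) :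
    IntegrableOn f (Ici a) := by
  have hIoi : IntegrableOn f (Ioi a) := by
    refine integrableOn_Ioi_of_intervalIntegral_norm_bounded C a
      (b := fun T : ℝ => T) (l := atTop) (fun T => ?_) tendsto_id ?_
    · rcases le_total a T with hT | hT
      · exact (hloc T hT).mono_set Ioc_subset_Icc_self
      · simp [Ioc_eq_empty_of_le hT]
    · filter_upwards [eventually_ge_atTop a] with T hT
      have : (∫ x in a..T, ‖f x‖) = ∫ x in a..T, f x := by
        apply intervalIntegral.integral_congr
        intro x hx
        rw [uIcc_of_le hT] at hx
        exact Real.norm_of_nonneg (hnn x hx.1)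
      rw [this]; exact hC T hT
  rwa [integrableOn_Ici_iff_integrableOn_Ioi]

theorem riccati_integral_bound_zero (s₀ : ℝ) (hs₀ : 0 < s₀)
    (h lam lam' J : ℝ → ℝ)
    (hhcont : ContinuousOn h (Ici s₀)) (hh0 : ∀ s ∈ Ici s₀, 0 ≤ h s)
    (hhint : IntegrableOn (fun s => s * h s) (Ici s₀))
    (hderiv : ∀ s ∈ Ici s₀, HasDerivAt lam (lam' s) s)
    (hcont : ContinuousOn lam' (Ici s₀))
    (hricc : ∀ s ∈ Ici s₀, |lam' s + lam s ^ 2| ≤ h s)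
    (hlim : Tendsto (fun s => s * lam s) atTop (nhds 0))
    (hJpos : ∀ s ∈ Ici s₀, 0 < J s)
    (hJ : ∀ s ∈ Ici s₀, HasDerivAt J (lam s * J s) s)
    (hJ0 : J s₀ = 1) :
    IntegrableOn (fun s => |lam s|) (Ici s₀) ∧
      ∀ s ∈ Ici s₀,
        Real.exp (-(∫ t in Ici s₀, |lam t|)) ≤ J s ∧
          J s ≤ Real.exp (∫ t in Ici s₀, |lam t|) := by
  -- basic continuity
  have hlamC : ∀ s ∈ Ici s₀, ContinuousAt lam s := fun s hs => (hderiv s hs).continuousAt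
  have hlamCO : ContinuousOn lam (Ici s₀) := fun s hs => (hlamC s hs).continuousWithinAt
  -- the perturbation g
  set g : ℝ → ℝ := fun s => lam' s + lam s ^ 2 with hg_def
  have hgC : ContinuousOn g (Ici s₀) := hcont.add ((hlamCO.pow 2))
  have hgbd : ∀ s ∈ Ici s₀, |g s| ≤ h s := hricc
  -- choose S
  obtain ⟨S₁, hS₁⟩ : ∃ S₁ : ℝ, ∀ s, S₁ ≤ s → |s * lam s| ≤ 1/2 := by
    have := Metric.tendsto_nhds.mp hlim (1/2) (by norm_num)
    rw [eventually_atTop] at this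
    obtain ⟨S₁, hS₁⟩ := this
    exact ⟨S₁, fun s hs => by
      have := hS₁ s hs; rw [Real.dist_eq, sub_zero] at this; linarith⟩
  set S : ℝ := max S₁ (s₀ + 1) with hS_def
  have hSs₀ : s₀ < S := lt_of_lt_of_le (by linarith) (le_max_right _ _)
  have hSmem : S ∈ Ici s₀ := le_of_lt hSs₀
  have hSsmall : ∀ s, S ≤ s → |s * lam s| ≤ 1/2 := fun s hs =>
    hS₁ s (le_trans (le_max_left _ _) hs)
  have hIciS : Ici S ⊆ Ici s₀ := Ici_subset_Ici.mpr (le_of_lt hSs₀)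
  have hSpos : 0 < S := lt_trans hs₀ hSs₀
  -- h is integrable on Ici s₀
  have hhint' : IntegrableOn h (Ici s₀) := by
    have hmeas : AEStronglyMeasurable h (volume.restrict (Ici s₀)) :=
      hhcont.aestronglyMeasurable measurableSet_Ici
    refine Integrable.mono' (hhint.const_mul s₀⁻¹) hmeas ?_
    rw [ae_restrict_iff' measurableSet_Ici]
    refine ae_of_all _ fun s hs => ?_
    rw [Real.norm_eq_abs, abs_of_nonneg (hh0 s hs)]
    have h1 : (1:ℝ) ≤ s₀⁻¹ * s := by
      rw [← inv_mul_cancel₀ (ne_of_gt hs₀)]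
      exact mul_le_mul_of_nonneg_left hs (le_of_lt (inv_pos.mpr hs₀))
    calc h s = 1 * h s := (one_mul _).symm
      _ ≤ (s₀⁻¹ * s) * h s := mul_le_mul_of_nonneg_right h1 (hh0 s hs)
      _ = s₀⁻¹ * (s * h s) := by ring
  -- lam T → 0
  have hlam0 : Tendsto lam atTop (nhds 0) := by
    have h1 : Tendsto (fun s : ℝ => (s * lam s) * s⁻¹) atTop (nhds 0) := by
      simpa using hlim.mul tendsto_inv_atTop_zero
    refine h1.congr' ?_
    filter_upwards [eventually_gt_atTop (0:ℝ)] with s hs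
    field_simp
  -- Step B : s * lam s ^ 2 integrable on Ici S
  set D : ℝ → ℝ := fun s => 2 * (s * lam s) * (lam s + s * lam' s) with hD_def
  have hFd : ∀ s ∈ Ici s₀, HasDerivAt (fun s => (s * lam s) ^ 2) (D s) s := by
    intro s hs
    have h1 : HasDerivAt (fun s => s * lam s) (1 * lam s + s * lam' s) s :=
      (hasDerivAt_id s).mul (hderiv s hs)
    have h2 := h1.pow 2
    refine h2.congr_deriv ?_
    norm_num [hD_def]
  have hDC : ContinuousOn D (Ici s₀) :=
    ((continuousOn_const.mul (continuousOn_id.mul hlamCO)).mul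
      (hlamCO.add (continuousOn_id.mul hcont)))
  have hkey : ∀ s, S ≤ s → s * lam s ^ 2 ≤ D s + s * h s := by
    intro s hs
    have hs' : s ∈ Ici s₀ := hIciS hs
    have hu := abs_le.mp (hSsmall s hs)
    have hg := abs_le.mp (hgbd s hs')
    have hspos : 0 < s := lt_of_lt_of_le hSpos hs
    have hlam'eq : lam' s = g s - lam s ^ 2 := by simp only [hg_def]; ring
    have P1 : 0 ≤ s * (lam s ^ 2 * (1 - 2 * (s * lam s))) :=
      mul_nonneg hspos.le (mul_nonneg (sq_nonneg _) (by linarith [hu.2]))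
    have P2 : 0 ≤ s * ((1 + 2 * (s * lam s)) * (h s + g s)) :=
      mul_nonneg hspos.le (mul_nonneg (by linarith [hu.1]) (by linarith [hg.1]))
    have P3 : 0 ≤ s * ((1 - 2 * (s * lam s)) * (h s - g s)) :=
      mul_nonneg hspos.le (mul_nonneg (by linarith [hu.2]) (by linarith [hg.2]))
    simp only [hD_def]
    rw [hlam'eq]
    nlinarith [P1, P2, P3]
  have hbound : ∀ T, S ≤ T →
      (∫ x in S..T, x * lam x ^ 2) ≤ 1/4 + ∫ t in Ici s₀, t * h t := by
    intro T hT
    have hsub : uIcc S T ⊆ Ici s₀ := by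
      rw [uIcc_of_le hT]; exact fun x hx => le_trans (le_of_lt hSs₀) hx.1
    have hint1 : IntervalIntegrable (fun s => s * lam s ^ 2) volume S T :=
      ((continuousOn_id.mul (hlamCO.pow 2)).mono hsub).intervalIntegrable
    have hintD : IntervalIntegrable D volume S T := (hDC.mono hsub).intervalIntegrable
    have hintsh : IntervalIntegrable (fun s => s * h s) volume S T :=
      ((continuousOn_id.mul hhcont).mono hsub).intervalIntegrable
    have hFTC : (∫ x in S..T, D x) = (T * lam T) ^ 2 - (S * lam S) ^ 2 :=
      intervalIntegral.integral_eq_sub_of_hasDerivAt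
        (fun x hx => hFd x (hsub hx)) hintD
    have hshle : (∫ x in S..T, x * h x) ≤ ∫ t in Ici s₀, t * h t := by
      rw [intervalIntegral.integral_of_le hT]
      refine setIntegral_mono_set hhint ?_ ?_
      · exact ae_restrict_of_forall_mem measurableSet_Ici fun x hx =>
          mul_nonneg (le_trans hs₀.le hx) (hh0 x hx)
      · refine HasSubset.Subset.eventuallyLE fun x hx => ?_
        exact le_trans (le_of_lt hSs₀) (le_of_lt hx.1)
    have hFT : (T * lam T) ^ 2 ≤ 1/4 := by
      have := abs_le.mp (hSsmall T hT)
      nlinarith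
    calc (∫ x in S..T, x * lam x ^ 2) ≤ ∫ x in S..T, (D x + x * h x) :=
          intervalIntegral.integral_mono_on hT hint1 (hintD.add hintsh)
            (fun x hx => hkey x hx.1)
      _ = (∫ x in S..T, D x) + ∫ x in S..T, x * h x :=
          intervalIntegral.integral_add hintD hintsh
      _ = ((T * lam T) ^ 2 - (S * lam S) ^ 2) + ∫ x in S..T, x * h x := by rw [hFTC]
      _ ≤ 1/4 + ∫ t in Ici s₀, t * h t := by
          nlinarith [sq_nonneg (S * lam S), hFT, hshle]
  have hI2 : IntegrableOn (fun s => s * lam s ^ 2) (Ici S) := by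
    refine my_integrableOn_Ici_of_bound S (1/4 + ∫ t in Ici s₀, t * h t) _
      (fun T hT => ?_) (fun s hs => ?_) hbound
    · refine ((continuousOn_id.mul (hlamCO.pow 2)).mono ?_).integrableOn_compact isCompact_Icc
      exact fun x hx => le_trans (le_of_lt hSs₀) hx.1
    · exact mul_nonneg (le_trans hSpos.le hs) (sq_nonneg _)
  -- lam ^ 2 integrable on Ici S
  have hI2' : IntegrableOn (fun s => lam s ^ 2) (Ici S) := by
    have hmeas : AEStronglyMeasurable (fun s => lam s ^ 2) (volume.restrict (Ici S)) :=
      ((hlamCO.pow 2).mono hIciS).aestronglyMeasurable measurableSet_Ici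
    refine Integrable.mono' (hI2.const_mul S⁻¹) hmeas ?_
    rw [ae_restrict_iff' measurableSet_Ici]
    refine ae_of_all _ fun s hs => ?_
    rw [Real.norm_eq_abs, abs_of_nonneg (sq_nonneg _)]
    have h1 : (1:ℝ) ≤ S⁻¹ * s := by
      rw [← inv_mul_cancel₀ (ne_of_gt hSpos)]
      exact mul_le_mul_of_nonneg_left hs (le_of_lt (inv_pos.mpr hSpos))
    calc lam s ^ 2 = 1 * lam s ^ 2 := (one_mul _).symm
      _ ≤ (S⁻¹ * s) * lam s ^ 2 := mul_le_mul_of_nonneg_right h1 (sq_nonneg _)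
      _ = S⁻¹ * (s * lam s ^ 2) := by ring
  -- ψ and its integrability
  set ψ : ℝ → ℝ := fun t => lam t ^ 2 + h t with hψ_def
  have hψ0 : ∀ t ∈ Ici s₀, 0 ≤ ψ t := fun t ht => add_nonneg (sq_nonneg _) (hh0 t ht)
  have hψC : ContinuousOn ψ (Ici s₀) := (hlamCO.pow 2).add hhcont
  have hψint : IntegrableOn ψ (Ici S) := hI2'.add (hhint'.mono_set hIciS)
  have htψint : IntegrableOn (fun t => t * ψ t) (Ici S) := by
    have : (fun t => t * ψ t) = fun t => t * lam t ^ 2 + t * h t := by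
      funext t; simp [hψ_def]; ring
    rw [this]; exact hI2.add (hhint.mono_set hIciS)
  -- lam' integrable on Ici S
  have hgint : IntegrableOn g (Ici S) := by
    have hmeas : AEStronglyMeasurable g (volume.restrict (Ici S)) :=
      (hgC.mono hIciS).aestronglyMeasurable measurableSet_Ici
    refine Integrable.mono' (hhint'.mono_set hIciS) hmeas ?_
    rw [ae_restrict_iff' measurableSet_Ici]
    exact ae_of_all _ fun s hs => hgbd s (hIciS hs)
  have hI3 : IntegrableOn lam' (Ici S) := by
    have : IntegrableOn (fun s => g s - lam s ^ 2) (Ici S) := hgint.sub hI2'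
    refine this.congr_fun (fun s hs => ?_) measurableSet_Ici
    simp [hg_def]
  -- Step C : |lam s| ≤ Φ s on Ici S
  set Φ : ℝ → ℝ := fun s => ∫ t in Ioi s, ψ t with hΦ_def
  have hΦ0 : ∀ s, S ≤ s → 0 ≤ Φ s := by
    intro s hs
    refine setIntegral_nonneg measurableSet_Ioi fun t ht => ?_
    exact hψ0 t (le_trans (le_of_lt hSs₀) (le_trans hs (le_of_lt ht)))
  have hIoiS : ∀ s, S ≤ s → Ioi s ⊆ Ici S := fun s hs x hx =>
    le_trans hs (le_of_lt hx)
  have hlamΦ : ∀ s, S ≤ s → |lam s| ≤ Φ s := by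
    intro s hs
    have hs' : s ∈ Ici s₀ := hIciS hs
    have key : Tendsto (fun T => ∫ x in s..T, lam' x) atTop
        (nhds (∫ t in Ioi s, lam' t)) :=
      intervalIntegral_tendsto_integral_Ioi s (hI3.mono_set (hIoiS s hs)) tendsto_id
    have key3 : Tendsto (fun T => ∫ x in s..T, lam' x) atTop (nhds (0 - lam s)) := by
      refine Tendsto.congr' ?_ ((hlam0.sub_const (lam s)))
      filter_upwards [eventually_ge_atTop s] with T hT
      have hsub : uIcc s T ⊆ Ici s₀ := by
        rw [uIcc_of_le hT]; exact fun x hx => le_trans hs' hx.1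
      rw [intervalIntegral.integral_eq_sub_of_hasDerivAt
        (fun x hx => hderiv x (hsub hx)) ((hcont.mono hsub).intervalIntegrable)]
    have heq : (∫ t in Ioi s, lam' t) = -lam s := by
      have := tendsto_nhds_unique key key3; linarith
    have hbd : ∀ t ∈ Ioi s, |lam' t| ≤ ψ t := by
      intro t ht
      have ht' : t ∈ Ici s₀ := mem_Ici.mpr (le_trans hs' (le_of_lt ht))
      have h1 : lam' t = g t - lam t ^ 2 := by simp [hg_def]
      calc |lam' t| ≤ |g t| + |lam t ^ 2| := by rw [h1]; exact abs_sub _ _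
        _ ≤ h t + lam t ^ 2 := by
            rw [abs_of_nonneg (sq_nonneg (lam t))]
            exact add_le_add_left (hgbd t ht') _
        _ = ψ t := by simp only [hψ_def]; ring
    calc |lam s| = |∫ t in Ioi s, lam' t| := by rw [heq, abs_neg]
      _ ≤ ∫ t in Ioi s, |lam' t| := by
          simpa [Real.norm_eq_abs] using
            norm_integral_le_integral_norm (μ := volume.restrict (Ioi s)) lam'
      _ ≤ ∫ t in Ioi s, ψ t := by
          refine setIntegral_mono_on ((hI3.mono_set (hIoiS s hs)).abs)
            (hψint.mono_set (hIoiS s hs)) measurableSet_Ioi hbd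
  -- Step D : Φ integrable on Ici S
  have hΦeq : ∀ s, s₀ ≤ s → Φ s = Φ S - ∫ x in S..s, ψ x := by
    intro s hs
    rcases le_total S s with hSs | hSs
    · have hun : Ioc S s ∪ Ioi s = Ioi S := Ioc_union_Ioi_eq_Ioi hSs
      have hsum : (∫ t in Ioi S, ψ t) = (∫ t in Ioc S s, ψ t) + ∫ t in Ioi s, ψ t := by
        rw [← hun]
        exact setIntegral_union Ioc_disjoint_Ioi_same measurableSet_Ioi
          ((hψint.mono_set (fun x hx => le_of_lt hx.1)))
          ((hψint.mono_set (hIoiS s hSs)))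
      simp only [hΦ_def]
      rw [intervalIntegral.integral_of_le hSs]
      linarith [hsum]
    · have hun : Ioc s S ∪ Ioi S = Ioi s := Ioc_union_Ioi_eq_Ioi hSs
      have hsum : (∫ t in Ioi s, ψ t) = (∫ t in Ioc s S, ψ t) + ∫ t in Ioi S, ψ t := by
        rw [← hun]
        refine setIntegral_union Ioc_disjoint_Ioi_same measurableSet_Ioi ?_ ?_
        · refine (hψC.mono ?_).integrableOn_compact isCompact_Icc |>.mono_set
            Ioc_subset_Icc_self
          exact fun x hx => le_trans hs hx.1
        · exact hψint.mono_set (fun x hx => mem_Ici.mpr (le_of_lt hx))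
      simp only [hΦ_def]
      rw [intervalIntegral.integral_symm s S, intervalIntegral.integral_of_le hSs]
      linarith [hsum]
  have hΦd : ∀ s, S ≤ s → HasDerivAt Φ (-ψ s) s := by
    intro s hs
    have hs₀s : s₀ < s := lt_of_lt_of_le hSs₀ hs
    have hψat : ContinuousAt ψ s := hψC.continuousAt (Ici_mem_nhds hs₀s)
    have hψmeas : StronglyMeasurableAtFilter ψ (nhds s) volume :=
      ⟨Ici s₀, Ici_mem_nhds hs₀s, hψC.aestronglyMeasurable measurableSet_Ici⟩
    have hii : IntervalIntegrable ψ volume S s := by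
      refine (hψC.mono ?_).intervalIntegrable
      rw [uIcc_of_le hs]; exact fun x hx => le_trans (le_of_lt hSs₀) hx.1
    have h1 : HasDerivAt (fun u => ∫ x in S..u, ψ x) (ψ s) s :=
      intervalIntegral.integral_hasDerivAt_right hii hψmeas hψat
    have h2 : HasDerivAt (fun u => Φ S - ∫ x in S..u, ψ x) (-ψ s) s := by
      exact ((hasDerivAt_const s (Φ S)).sub h1).congr_deriv (by simp)
    refine h2.congr_of_eventuallyEq ?_
    filter_upwards [Ici_mem_nhds hs₀s] with u hu
    exact hΦeq u hu
  have hΦC : ContinuousOn Φ (Ici S) := fun s hs =>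
    (hΦd s hs).continuousAt.continuousWithinAt
  have htψ0 : ∀ t, S ≤ t → 0 ≤ t * ψ t :=
    fun t ht => mul_nonneg (le_trans hSpos.le ht) (hψ0 t (hIciS ht))
  have hΦint : IntegrableOn Φ (Ici S) := by
    set C : ℝ := ∫ t in Ici S, t * ψ t with hC_def
    have hTΦ : ∀ T, S ≤ T → T * Φ T ≤ C := by
      intro T hT
      have h1 : T * Φ T = ∫ t in Ioi T, T * ψ t := by
        simp only [hΦ_def]
        rw [integral_const_mul]
      rw [h1]
      calc (∫ t in Ioi T, T * ψ t) ≤ ∫ t in Ioi T, t * ψ t := by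
            refine setIntegral_mono_on ((hψint.mono_set (hIoiS T hT)).const_mul T)
              (htψint.mono_set (hIoiS T hT)) measurableSet_Ioi fun t ht => ?_
            exact mul_le_mul_of_nonneg_right (le_of_lt ht)
              (hψ0 t (hIciS (hIoiS T hT ht)))
        _ ≤ C := by
            exact setIntegral_mono_set htψint
              (ae_restrict_of_forall_mem measurableSet_Ici fun t ht => htψ0 t ht)
              (HasSubset.Subset.eventuallyLE (hIoiS T hT))
    have hΦbd : ∀ T, S ≤ T → (∫ x in S..T, Φ x) ≤ 2 * C := by
      intro T hT
      have hsub : uIcc S T ⊆ Ici S := by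
        rw [uIcc_of_le hT]; exact fun x hx => hx.1
      have hintΦ : IntervalIntegrable Φ volume S T :=
        (hΦC.mono hsub).intervalIntegrable
      have hinttψ : IntervalIntegrable (fun t => t * ψ t) volume S T :=
        ((continuousOn_id.mul (hψC.mono hIciS)).mono hsub).intervalIntegrable
      have hpartd : ∀ x ∈ uIcc S T, HasDerivAt (fun u => u * Φ u) (Φ x - x * ψ x) x := by
        intro x hx
        have := (hasDerivAt_id x).mul (hΦd x (hsub hx).out)
        refine this.congr_deriv ?_
        simp only [id_eq]
        ring
      have hFTC2 : (∫ x in S..T, (Φ x - x * ψ x)) = T * Φ T - S * Φ S :=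
        intervalIntegral.integral_eq_sub_of_hasDerivAt hpartd (hintΦ.sub hinttψ)
      have hsplit : (∫ x in S..T, Φ x)
          = (∫ x in S..T, (Φ x - x * ψ x)) + ∫ x in S..T, x * ψ x := by
        rw [← intervalIntegral.integral_add (hintΦ.sub hinttψ) hinttψ]
        congr 1; funext x; ring
      have htψle : (∫ x in S..T, x * ψ x) ≤ C := by
        rw [intervalIntegral.integral_of_le hT]
        exact setIntegral_mono_set htψint
          (ae_restrict_of_forall_mem measurableSet_Ici fun t ht => htψ0 t ht)
          (HasSubset.Subset.eventuallyLE (fun x hx => le_of_lt hx.1))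
      have hSΦ : 0 ≤ S * Φ S := mul_nonneg hSpos.le (hΦ0 S le_rfl)
      rw [hsplit, hFTC2]
      have := hTΦ T hT
      linarith
    refine my_integrableOn_Ici_of_bound S (2 * C) _ (fun T hT => ?_)
      (fun s hs => hΦ0 s hs) hΦbd
    exact (hΦC.mono Icc_subset_Ici_self).integrableOn_compact isCompact_Icc
  -- conclude integrability of |lam|
  have habs : IntegrableOn (fun s => |lam s|) (Ici s₀) := by
    have h1 : IntegrableOn (fun s => |lam s|) (Icc s₀ S) :=
      ((hlamCO.mono Icc_subset_Ici_self).abs).integrableOn_compact isCompact_Icc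
    have h2 : IntegrableOn (fun s => |lam s|) (Ici S) := by
      have hmeas : AEStronglyMeasurable (fun s => |lam s|) (volume.restrict (Ici S)) :=
        ((hlamCO.mono hIciS).abs).aestronglyMeasurable measurableSet_Ici
      refine Integrable.mono' hΦint hmeas ?_
      rw [ae_restrict_iff' measurableSet_Ici]
      refine ae_of_all _ fun s hs => ?_
      rw [Real.norm_eq_abs, abs_abs]
      exact hlamΦ s hs
    refine (h1.union h2).mono_set fun x hx => ?_
    rcases le_total x S with hxS | hxS
    · exact Or.inl ⟨hx, hxS⟩
    · exact Or.inr hxS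
  refine ⟨habs, ?_⟩
  intro s hs
  have hlog : ∀ x ∈ Ici s₀, HasDerivAt (fun t => Real.log (J t)) (lam x) x := by
    intro x hx
    have hJx := ne_of_gt (hJpos x hx)
    have := (hJ x hx).log hJx
    convert this using 1
    field_simp
  have hFTC : (∫ x in s₀..s, lam x) = Real.log (J s) := by
    have hsub : uIcc s₀ s ⊆ Ici s₀ := by
      rw [uIcc_of_le hs]; exact fun x hx => hx.1
    have := intervalIntegral.integral_eq_sub_of_hasDerivAt
      (fun x hx => hlog x (hsub hx)) ((hlamCO.mono hsub).intervalIntegrable)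
    rw [this, hJ0, Real.log_one, sub_zero]
  have habs2 : |Real.log (J s)| ≤ ∫ t in Ici s₀, |lam t| := by
    rw [← hFTC]
    calc |∫ x in s₀..s, lam x| ≤ ∫ x in s₀..s, |lam x| :=
          intervalIntegral.abs_integral_le_integral_abs hs
      _ ≤ ∫ t in Ici s₀, |lam t| := by
          rw [intervalIntegral.integral_of_le hs]
          exact setIntegral_mono_set habs
            (ae_restrict_of_forall_mem measurableSet_Ici fun t _ => abs_nonneg _)
            (HasSubset.Subset.eventuallyLE (fun x hx => le_of_lt hx.1))
  have hle := abs_le.mp habs2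
  constructor
  · rw [← Real.exp_log (hJpos s hs)]
    exact Real.exp_le_exp.mpr (by linarith [hle.1])
  · rw [← Real.exp_log (hJpos s hs)]
    exact Real.exp_le_exp.mpr (by linarith [hle.2])
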